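/- Let (X,G) be a Polish structure and H a countable group. Let a be a finite tuple of elements of H(X), A a finite subset of H(X), and b a finite tuple of elements of X enumerating ã. Then for every ordinal α: NM(a/A) ≥ α holds in (H(X),G) if and only if NM(b/Ã) ≥ α holds in (X,G); in particular NM(a/A) = NM(b/Ã). -/

import Mathlib

open Function

variable (X H : Type*)

/-- `H(X)`: the direct sum of copies of `H` indexed by `X`, realized as the subgroup of
the product group `X → H` consisting of finitely supported functions. -/
def FinSupp [Group H] : Subgroup (X → H) where
  carrier := {f | (Function.mulSupport f).Finite}
  one_mem' := by simp [Function.mulSupport_one]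
  mul_mem' {f g} hf hg := (hf.union hg).subset (Function.mulSupport_mul f g)
  inv_mem' {f} hf := by simpa [Function.mulSupport_inv] using hf

variable (G : Type*) [Group G] [Group H] [MulAction G X]

/-- The action of `G` on `H(X)` given by `(g • y) x = y (g⁻¹ • x)`. -/
instance : MulAction G ↥(FinSupp X H) where
  smul g y := ⟨fun x => (y : X → H) (g⁻¹ • x), by
    show (Function.mulSupport ((y : X → H) ∘ (fun x => g⁻¹ • x))).Finite
    rw [Function.mulSupport_comp_eq_preimage]
    exact y.2.preimage ((MulAction.injective (g⁻¹ : G)).injOn)⟩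
  one_smul y := Subtype.ext <| funext fun x => by
    show (y : X → H) ((1 : G)⁻¹ • x) = (y : X → H) x
    rw [inv_one, one_smul]
  mul_smul g₁ g₂ y := Subtype.ext <| funext fun x => by
    show (y : X → H) ((g₁ * g₂)⁻¹ • x) = (y : X → H) (g₂⁻¹ • g₁⁻¹ • x)
    rw [mul_inv_rev, mul_smul]

lemma smul_finSupp_apply (g : G) (y : ↥(FinSupp X H)) (x : X) :
    ((g • y : ↥(FinSupp X H)) : X → H) x = (y : X → H) (g⁻¹ • x) := rfl

/-- The pointwise stabilizer of a set `A ⊆ X` in `G`. -/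
def fixPt (G : Type*) [Group G] (X : Type*) [MulAction G X] (A : Set X) : Subgroup G where
  carrier := {g | ∀ x ∈ A, g • x = x}
  one_mem' := fun x _ => one_smul G x
  mul_mem' {a b} ha hb := fun x hx => by rw [mul_smul, hb x hx, ha x hx]
  inv_mem' {a} ha := fun x hx => by
    conv_lhs => rw [← ha x hx]
    rw [inv_smul_smul]

/-- The orbit `o(a/A)` of a finite tuple `a` over a set `A`: the orbit of `a` under the
pointwise stabilizer `G_A`, acting diagonally. -/
def orbitOver (G : Type*) [Group G] (X : Type*) [MulAction G X] {n : ℕ}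
    (A : Set X) (a : Fin n → X) : Set (Fin n → X) :=
  {b | ∃ g ∈ fixPt G X A, (fun i => g • a i) = b}

/-- `a` is nm-independent from `B` over `A` (written `a ⫝_A B`): the set of those `g` in the
pointwise stabilizer `G_A` with `g • a ∈ o(a/A ∪ B)` is non-meager in `G_A` (carrying the
subspace topology from `G`). -/
def NMIndep (G : Type*) [Group G] [TopologicalSpace G] (X : Type*) [MulAction G X]
    {n : ℕ} (a : Fin n → X) (A B : Set X) : Prop :=
  ¬ IsMeagre {g : ↥(fixPt G X A) | (fun i => (g : G) • a i) ∈ orbitOver G X (A ∪ B) a}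

/-- `a ⫝_A B` for a single element `a`. -/
def NMIndep1 (G : Type*) [Group G] [TopologicalSpace G] (X : Type*) [MulAction G X]
    (a : X) (A B : Set X) : Prop :=
  NMIndep G X (fun _ : Fin 1 => a) A B

/-- `Ã ⊆ X` for a set `A ⊆ H(X)`: the union of the supports of the members of `A`. -/
def tildeSet (A : Set ↥(FinSupp X H)) : Set X :=
  ⋃ y ∈ A, Function.mulSupport (y : X → H)

/-- `NM(a/A) ≥ α`, defined by recursion on the ordinal `α`: `NM(a/A) ≥ 0` always holds,
`NM(a/A) ≥ α + 1` iff there is a finite `B` with `A ⊆ B` such that `a` is nm-dependent on `B`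
over `A` and `NM(a/B) ≥ α`, and for limit `λ`, `NM(a/A) ≥ λ` iff `NM(a/A) ≥ α` for all
`α < λ`. -/
noncomputable def NMge (G : Type*) [Group G] [TopologicalSpace G] (X : Type*) [MulAction G X]
    {n : ℕ} (a : Fin n → X) (α : Ordinal) : Set X → Prop :=
  Ordinal.limitRecOn α (fun _ => True)
    (fun _ ih A => ∃ B : Set X, A ⊆ B ∧ B.Finite ∧ ¬ NMIndep G X a A B ∧ ih B)
    (fun o _ ih A => ∀ β (hβ : β < o), ih β hβ A)

/-- `ã ⊆ X` for a finite tuple `a` of elements of `H(X)`: the union of the supports of the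
entries of `a`. -/
def tildeTuple {n : ℕ} (a : Fin n → ↥(FinSupp X H)) : Set X :=
  ⋃ i, Function.mulSupport ((a i : X → H))

section AuxTop

open Topology

variable {Y Z : Type*} [TopologicalSpace Y] [TopologicalSpace Z]

lemma aux_isNowhereDense_image {f : Y → Z} (hf : Topology.IsEmbedding f) {t : Set Y}
    (ht : IsNowhereDense t) : IsNowhereDense (f '' t) := by
  rw [IsNowhereDense, ← Set.not_nonempty_iff_eq_empty]
  rintro ⟨z, hz⟩
  have hzc : z ∈ closure (f '' t) := interior_subset hz
  have hmeets : (interior (closure (f '' t)) ∩ f '' t).Nonempty :=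
    mem_closure_iff.1 hzc _ isOpen_interior hz
  obtain ⟨w, hwO, y, hyt, rfl⟩ := hmeets
  have hU : IsOpen (f ⁻¹' interior (closure (f '' t))) :=
    isOpen_interior.preimage hf.continuous
  have hUsub : f ⁻¹' interior (closure (f '' t)) ⊆ closure t := by
    intro x hx
    rw [hf.closure_eq_preimage_closure_image t]
    exact Set.mem_preimage.2 (interior_subset hx)
  have hy : y ∈ interior (closure t) := interior_maximal hUsub hU hwO
  rw [ht] at hy
  exact hy

lemma aux_isMeagre_image {f : Y → Z} (hf : Topology.IsEmbedding f) {t : Set Y}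
    (ht : IsMeagre t) : IsMeagre (f '' t) := by
  rw [isMeagre_iff_countable_union_isNowhereDense] at ht ⊢
  obtain ⟨S, hND, hc, hsub⟩ := ht
  refine ⟨(Set.image f) '' S, ?_, hc.image _, ?_⟩
  · rintro _ ⟨u, hu, rfl⟩
    exact aux_isNowhereDense_image hf (hND u hu)
  · rintro _ ⟨y, hy, rfl⟩
    obtain ⟨u, hu, hyu⟩ := hsub hy
    exact ⟨f '' u, ⟨u, hu, rfl⟩, ⟨y, hyu, rfl⟩⟩

lemma aux_isMeagre_biUnion {ι : Type*} {s : Set ι} (hs : s.Finite)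
    {f : ι → Set Y} (h : ∀ i ∈ s, IsMeagre (f i)) : IsMeagre (⋃ i ∈ s, f i) := by
  rw [IsMeagre, Set.compl_iUnion₂]
  exact (Filter.biInter_mem hs).2 h

lemma aux_not_isMeagre_univ [BaireSpace Y] [Nonempty Y] :
    ¬ IsMeagre (Set.univ : Set Y) := by
  intro h
  have hd : Dense ((Set.univ : Set Y)ᶜ) := dense_of_mem_residual h
  rw [Set.compl_univ] at hd
  obtain ⟨x, hx⟩ := hd.nonempty
  exact hx

end AuxTop
section AuxGroup

variable {X' H' G' : Type*} [Group H'] [Group G'] [MulAction G' X']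

lemma mem_fixPt' {Y : Type*} [MulAction G' Y] {C : Set Y} {g : G'} :
    g ∈ fixPt G' Y C ↔ ∀ x ∈ C, g • x = x := Iff.rfl

lemma fixPt_mono' {Y : Type*} [MulAction G' Y] {C D : Set Y} (h : C ⊆ D) :
    fixPt G' Y D ≤ fixPt G' Y C := fun _ hg x hx => hg x (h hx)

lemma tildeSet_union' (A B : Set ↥(FinSupp X' H')) :
    tildeSet X' H' (A ∪ B) = tildeSet X' H' A ∪ tildeSet X' H' B :=
  Set.biUnion_union _ _ _

lemma tildeSet_range' {n : ℕ} (a : Fin n → ↥(FinSupp X' H')) :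
    tildeSet X' H' (Set.range a) = tildeTuple X' H' a :=
  Set.biUnion_range

lemma tildeSet_mono' {A B : Set ↥(FinSupp X' H')} (h : A ⊆ B) :
    tildeSet X' H' A ⊆ tildeSet X' H' B :=
  Set.biUnion_subset_biUnion_left h

lemma tildeSet_finite' {A : Set ↥(FinSupp X' H')} (h : A.Finite) :
    (tildeSet X' H' A).Finite :=
  h.biUnion fun y _ => y.2

lemma smul_eq_of_fix_support' (g : G') (y : ↥(FinSupp X' H'))
    (h : ∀ x ∈ Function.mulSupport (y : X' → H'), g • x = x) : g • y = y := by
  apply Subtype.ext; funext x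
  rw [smul_finSupp_apply]
  by_cases hx : x ∈ Function.mulSupport (y : X' → H')
  · have hgx : g⁻¹ • x = x := by rw [inv_smul_eq_iff]; exact (h x hx).symm
    rw [hgx]
  · by_cases hx' : g⁻¹ • x ∈ Function.mulSupport (y : X' → H')
    · exfalso
      have h1 := h _ hx'
      rw [smul_inv_smul] at h1
      rw [← h1] at hx'
      exact hx hx'
    · have h1 : (y : X' → H') (g⁻¹ • x) = 1 := Function.notMem_mulSupport.1 hx'
      have h2 : (y : X' → H') x = 1 := Function.notMem_mulSupport.1 hx
      rw [h1, h2]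

lemma smul_mem_tildeSet' {A' : Set ↥(FinSupp X' H')} {k : G'}
    (hk : k ∈ fixPt G' ↥(FinSupp X' H') A') {x : X'} (hx : x ∈ tildeSet X' H' A') :
    k • x ∈ tildeSet X' H' A' := by
  obtain ⟨y, hyA, hxy⟩ : ∃ y ∈ A', x ∈ Function.mulSupport (y : X' → H') := by
    simpa [tildeSet] using hx
  have hky : k • y = y := hk y hyA
  have hcf := congrFun (Subtype.ext_iff.1 hky) (k • x)
  rw [smul_finSupp_apply, inv_smul_smul] at hcf
  refine Set.mem_biUnion hyA ?_
  rw [Function.mem_mulSupport] at hxy ⊢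
  rwa [hcf] at hxy

lemma fixPt_le_of_support' (A' : Set ↥(FinSupp X' H')) {C : Set X'}
    (hC : tildeSet X' H' A' ⊆ C) :
    fixPt G' X' C ≤ fixPt G' ↥(FinSupp X' H') A' := by
  intro g hg y hy
  apply smul_eq_of_fix_support'
  intro x hx
  exact hg x (hC (Set.mem_biUnion hy hx))

lemma fixPt_cover' (A' : Set ↥(FinSupp X' H')) (hA' : A'.Finite) :
    ∃ F : Set G', F.Finite ∧ F ⊆ (fixPt G' ↥(FinSupp X' H') A' : Set G') ∧
      ∀ k ∈ fixPt G' ↥(FinSupp X' H') A', ∃ t ∈ F, t⁻¹ * k ∈ fixPt G' X' (tildeSet X' H' A') := by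
  classical
  have hCfin : (tildeSet X' H' A').Finite := tildeSet_finite' hA'
  haveI : Finite ↥(tildeSet X' H' A') := hCfin.to_subtype
  set K : Set G' := (fixPt G' ↥(FinSupp X' H') A' : Set G') with hK
  set ρ : G' → (↥(tildeSet X' H' A') → X') := fun k x => k • (x : X') with hρ
  have hRsub : ρ '' K ⊆ {f : ↥(tildeSet X' H' A') → X' | ∀ i, f i ∈ tildeSet X' H' A'} := by
    rintro _ ⟨k, hk, rfl⟩ x
    exact smul_mem_tildeSet' hk x.2
  have hRfin : (ρ '' K).Finite := (Set.Finite.pi' fun _ => hCfin).subset hRsub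
  have hch : ∀ f ∈ ρ '' K, ∃ k, k ∈ K ∧ ρ k = f := by
    rintro f ⟨k, hk, rfl⟩; exact ⟨k, hk, rfl⟩
  choose! sel hsel₁ hsel₂ using hch
  refine ⟨sel '' (ρ '' K), hRfin.image _, ?_, ?_⟩
  · rintro _ ⟨f, hf, rfl⟩; exact hsel₁ f hf
  · intro k hk
    refine ⟨sel (ρ k), Set.mem_image_of_mem _ (Set.mem_image_of_mem _ hk), ?_⟩
    intro x hx
    have h2 := congrFun (hsel₂ (ρ k) (Set.mem_image_of_mem _ hk)) ⟨x, hx⟩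
    rw [mul_smul]
    change sel (ρ k) • x = k • x at h2
    rw [← h2]
    exact inv_smul_smul _ _

lemma fixPt_isClosed' [TopologicalSpace G'] (hstab : ∀ x : X', IsClosed {g : G' | g • x = x})
    (C : Set X') : IsClosed ((fixPt G' X' C : Subgroup G') : Set G') := by
  have h : ((fixPt G' X' C : Subgroup G') : Set G') = ⋂ x ∈ C, {g : G' | g • x = x} := by
    ext g
    simp only [Set.mem_iInter, Set.mem_setOf_eq, SetLike.mem_coe, mem_fixPt']
  rw [h]
  exact isClosed_biInter fun x _ => hstab x

lemma orbit_char' {Y : Type*} [MulAction G' Y] {n : ℕ} (c : Fin n → Y) (A B : Set Y)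
    (g : G') (hg : g ∈ fixPt G' Y A) :
    ((fun i => g • c i) ∈ orbitOver G' Y (A ∪ B) c) ↔
      ∃ k ∈ fixPt G' Y (A ∪ B), ∃ h ∈ fixPt G' Y (A ∪ Set.range c), g = k * h := by
  constructor
  · rintro ⟨k, hk, heq⟩
    refine ⟨k, hk, k⁻¹ * g, ?_, by group⟩
    rintro y (hy | ⟨i, rfl⟩)
    · rw [mul_smul, hg y hy]
      have hky : k • y = y := hk y (Or.inl hy)
      conv_lhs => rw [← hky]
      rw [inv_smul_smul]
    · have hi : k • c i = g • c i := congrFun heq i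
      rw [mul_smul, ← hi, inv_smul_smul]
  · rintro ⟨k, hk, h, hh, rfl⟩
    refine ⟨k, hk, ?_⟩
    funext i
    rw [mul_smul, hh (c i) (Or.inr ⟨i, rfl⟩)]

end AuxGroup
section AuxCore

variable {X' H' G' : Type*} [Group H'] [Group G'] [MulAction G' X']
variable [TopologicalSpace G'] [IsTopologicalGroup G']

lemma core_indep (hstab : ∀ x : X', IsClosed {g : G' | g • x = x})
    {n m : ℕ} (a : Fin n → ↥(FinSupp X' H')) (b : Fin m → X')
    (hb : Set.range b = tildeTuple X' H' a)
    (A' B' : Set ↥(FinSupp X' H')) (hA' : A'.Finite) (hB' : B'.Finite) :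
    NMIndep G' ↥(FinSupp X' H') a A' B' ↔
      NMIndep G' X' b (tildeSet X' H' A') (tildeSet X' H' B') := by
  classical
  unfold NMIndep
  rw [not_iff_not]
  set W : Subgroup G' := fixPt G' ↥(FinSupp X' H') A' with hW
  set V : Subgroup G' := fixPt G' X' (tildeSet X' H' A') with hV
  have hVW : V ≤ W := fixPt_le_of_support' A' subset_rfl
  set KH : Subgroup G' := fixPt G' ↥(FinSupp X' H') (A' ∪ B') with hKH
  set HaH : Subgroup G' := fixPt G' ↥(FinSupp X' H') (A' ∪ Set.range a) with hHaH
  set K₀ : Subgroup G' := fixPt G' X' (tildeSet X' H' A' ∪ tildeSet X' H' B') with hK₀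
  set H₀ : Subgroup G' := fixPt G' X' (tildeSet X' H' A' ∪ Set.range b) with hH₀
  have hKHW : KH ≤ W := fixPt_mono' Set.subset_union_left
  have hHaW : HaH ≤ W := fixPt_mono' Set.subset_union_left
  have hK₀V : K₀ ≤ V := fixPt_mono' Set.subset_union_left
  have hH₀V : H₀ ≤ V := fixPt_mono' Set.subset_union_left
  have hK₀KH : K₀ ≤ KH := by
    rw [hK₀, ← tildeSet_union']
    exact fixPt_le_of_support' (A' ∪ B') subset_rfl
  have hH₀Ha : H₀ ≤ HaH := by
    rw [hH₀, hb, ← tildeSet_range' a, ← tildeSet_union']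
    exact fixPt_le_of_support' (A' ∪ Set.range a) subset_rfl
  -- rewrite both sets via the orbit characterization
  have hSdef : {g : ↥W | (fun i => (g : G') • a i) ∈ orbitOver G' ↥(FinSupp X' H') (A' ∪ B') a}
      = {g : ↥W | ∃ k ∈ KH, ∃ h ∈ HaH, (g : G') = k * h} := by
    ext g
    exact orbit_char' a A' B' (g : G') g.2
  have hTdef : {g : ↥V |
        (fun i => (g : G') • b i) ∈ orbitOver G' X' (tildeSet X' H' A' ∪ tildeSet X' H' B') b}
      = {g : ↥V | ∃ k ∈ K₀, ∃ h ∈ H₀, (g : G') = k * h} := by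
    ext g
    exact orbit_char' b (tildeSet X' H' A') (tildeSet X' H' B') (g : G') g.2
  rw [hSdef, hTdef]
  -- the inclusion map
  set j : ↥V → ↥W := fun g => (⟨(g : G'), hVW g.2⟩ : ↥W) with hj
  have hjc : Continuous j := Continuous.subtype_mk continuous_subtype_val _
  have hjemb : Topology.IsEmbedding j := by
    refine ⟨Topology.IsInducing.of_comp hjc continuous_subtype_val ?_, ?_⟩
    · have : (Subtype.val ∘ j) = (Subtype.val : ↥V → G') := rfl
      rw [this]
      exact Topology.IsInducing.subtypeVal
    · intro x y hxy
      have h2 : ((j x : ↥W) : G') = ((j y : ↥W) : G') := congrArg Subtype.val hxy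
      exact Subtype.ext h2
  -- covers
  obtain ⟨F₁, hF₁fin, hF₁sub, hF₁cov⟩ := fixPt_cover' (G' := G') (A' ∪ B') (hA'.union hB')
  obtain ⟨F₂, hF₂fin, hF₂sub, hF₂cov⟩ :=
    fixPt_cover' (G' := G') (A' ∪ Set.range a) (hA'.union (Set.finite_range a))
  obtain ⟨F₀, hF₀fin, hF₀sub, hF₀cov⟩ := fixPt_cover' (G' := G') A' hA'
  rw [tildeSet_union'] at hF₁cov
  rw [tildeSet_union', tildeSet_range' a, ← hb] at hF₂cov
  -- openness of V inside W
  have hVclosed : IsClosed (V : Set G') := fixPt_isClosed' hstab _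
  have hrange_open : IsOpen {g : ↥W | (g : G') ∈ V} := by
    have hcompl : {g : ↥W | (g : G') ∈ V}ᶜ =
        Subtype.val ⁻¹' (⋃ t ∈ {t ∈ F₀ | t ∉ V}, {g : G' | t⁻¹ * g ∈ (V : Set G')}) := by
      ext g
      simp only [Set.mem_compl_iff, Set.mem_setOf_eq, Set.mem_preimage, Set.mem_iUnion,
        Set.mem_sep_iff, SetLike.mem_coe]
      constructor
      · intro hgV
        obtain ⟨t, htF, htk⟩ := hF₀cov (g : G') g.2
        refine ⟨t, ⟨htF, fun htV => hgV ?_⟩, htk⟩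
        have hgeq : (g : G') = t * (t⁻¹ * (g : G')) := by group
        rw [hgeq]
        exact mul_mem htV htk
      · rintro ⟨t, ⟨htF, htV⟩, htg⟩ hgV
        refine htV ?_
        have hteq : t = (g : G') * (t⁻¹ * (g : G'))⁻¹ := by group
        rw [hteq]
        exact mul_mem hgV (inv_mem htg)
    rw [← isClosed_compl_iff, hcompl]
    refine IsClosed.preimage continuous_subtype_val ?_
    refine Set.Finite.isClosed_biUnion (hF₀fin.sep _) fun t _ => ?_
    exact hVclosed.preimage (continuous_const.mul continuous_id)
  have hjrange : Set.range j = {g : ↥W | (g : G') ∈ V} := by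
    ext g
    constructor
    · rintro ⟨x, rfl⟩
      exact x.2
    · intro hgV
      exact ⟨⟨(g : G'), hgV⟩, Subtype.ext rfl⟩
  have hjoe : Topology.IsOpenEmbedding j := ⟨hjemb, by rw [hjrange]; exact hrange_open⟩
  constructor
  · -- meagre S → meagre T
    intro hS
    refine (IsMeagre.preimage_of_isOpenMap hjc hjoe.isOpenMap hS).mono ?_
    rintro g ⟨k, hk, h, hh, hgkh⟩
    exact ⟨k, hK₀KH hk, h, hH₀Ha hh, hgkh⟩
  · -- meagre T → meagre S
    intro hT
    have hcover : {g : ↥W | ∃ k ∈ KH, ∃ h ∈ HaH, (g : G') = k * h} ⊆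
        ⋃ t ∈ F₁, ⋃ f ∈ F₂, {g : ↥W | ∃ k₀ ∈ K₀, ∃ h₀ ∈ H₀, (g : G') = t * (k₀ * h₀) * f⁻¹} := by
      rintro g ⟨k, hk, h, hh, hgkh⟩
      obtain ⟨t, htF, htk⟩ := hF₁cov k hk
      obtain ⟨f, hfF, hfh⟩ := hF₂cov h⁻¹ (inv_mem hh)
      refine Set.mem_biUnion htF (Set.mem_biUnion hfF ?_)
      refine ⟨t⁻¹ * k, htk, (f⁻¹ * h⁻¹)⁻¹, inv_mem hfh, ?_⟩
      rw [hgkh]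
      group
    refine IsMeagre.mono hcover ?_
    refine aux_isMeagre_biUnion hF₁fin fun t htF => aux_isMeagre_biUnion hF₂fin fun f hfF => ?_
    have htW : t ∈ W := hKHW (hF₁sub htF)
    have hfW : f ∈ W := hHaW (hF₂sub hfF)
    set ψ : ↥W ≃ₜ ↥W :=
      (Homeomorph.mulLeft (⟨t, htW⟩ : ↥W)).trans (Homeomorph.mulRight (⟨f, hfW⟩ : ↥W)⁻¹)
      with hψ
    have hψval : ∀ x : ↥W, ((ψ x : ↥W) : G') = t * (x : G') * f⁻¹ := by
      intro x
      rfl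
    have hQ : IsMeagre {g : ↥W | ∃ k₀ ∈ K₀, ∃ h₀ ∈ H₀, (g : G') = k₀ * h₀} := by
      have himg : {g : ↥W | ∃ k₀ ∈ K₀, ∃ h₀ ∈ H₀, (g : G') = k₀ * h₀}
          = j '' {g : ↥V | ∃ k ∈ K₀, ∃ h ∈ H₀, (g : G') = k * h} := by
        ext g
        constructor
        · rintro ⟨k₀, hk₀, h₀, hh₀, hg⟩
          have hgV : (g : G') ∈ V := by
            rw [hg]
            exact mul_mem (hK₀V hk₀) (hH₀V hh₀)
          exact ⟨⟨(g : G'), hgV⟩, ⟨k₀, hk₀, h₀, hh₀, hg⟩, Subtype.ext rfl⟩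
        · rintro ⟨x, ⟨k₀, hk₀, h₀, hh₀, hx⟩, rfl⟩
          exact ⟨k₀, hk₀, h₀, hh₀, hx⟩
      rw [himg]
      exact aux_isMeagre_image hjemb hT
    have himg2 : {g : ↥W | ∃ k₀ ∈ K₀, ∃ h₀ ∈ H₀, (g : G') = t * (k₀ * h₀) * f⁻¹}
        = ψ '' {g : ↥W | ∃ k₀ ∈ K₀, ∃ h₀ ∈ H₀, (g : G') = k₀ * h₀} := by
      ext g
      constructor
      · rintro ⟨k₀, hk₀, h₀, hh₀, hg⟩
        refine ⟨(⟨t, htW⟩ : ↥W)⁻¹ * g * ⟨f, hfW⟩, ⟨k₀, hk₀, h₀, hh₀, ?_⟩, ?_⟩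
        · show t⁻¹ * (g : G') * f = k₀ * h₀
          rw [hg]
          group
        · apply Subtype.ext
          rw [hψval]
          show t * (t⁻¹ * (g : G') * f) * f⁻¹ = (g : G')
          group
      · rintro ⟨x, ⟨k₀, hk₀, h₀, hh₀, hx⟩, rfl⟩
        refine ⟨k₀, hk₀, h₀, hh₀, ?_⟩
        rw [hψval, hx]
    rw [himg2]
    exact aux_isMeagre_image (Homeomorph.isEmbedding ψ) hQ

end AuxCore
section AuxNMge

variable {X' H' G' : Type*} [Group H'] [Group G'] [MulAction G' X']
variable [TopologicalSpace G']

lemma NMge_zero' {Y : Type*} [MulAction G' Y] {n : ℕ} (c : Fin n → Y) (A : Set Y) :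
    NMge G' Y c 0 A := by
  unfold NMge
  rw [Ordinal.limitRecOn_zero]
  trivial

lemma NMge_succ' {Y : Type*} [MulAction G' Y] {n : ℕ} (c : Fin n → Y) (o : Ordinal) (A : Set Y) :
    NMge G' Y c (Order.succ o) A ↔
      ∃ B : Set Y, A ⊆ B ∧ B.Finite ∧ ¬ NMIndep G' Y c A B ∧ NMge G' Y c o B := by
  unfold NMge
  rw [Ordinal.limitRecOn_succ]

lemma NMge_limit' {Y : Type*} [MulAction G' Y] {n : ℕ} (c : Fin n → Y) {o : Ordinal}
    (ho : Order.IsSuccLimit o) (A : Set Y) :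
    NMge G' Y c o A ↔ ∀ β < o, NMge G' Y c β A := by
  unfold NMge
  rw [Ordinal.limitRecOn_limit _ _ _ _ ho]

lemma not_isMeagre_univ_subgroup' [PolishSpace G'] {W : Subgroup G'}
    (hcl : IsClosed (W : Set G')) : ¬ IsMeagre (Set.univ : Set ↥W) := by
  haveI : PolishSpace ↥W := hcl.polishSpace
  letI := TopologicalSpace.upgradeIsCompletelyMetrizable ↥W
  haveI : Nonempty ↥W := ⟨1⟩
  exact aux_not_isMeagre_univ

lemma main_nontrivial' [IsTopologicalGroup G'] [Nontrivial H']
    (hstab : ∀ x : X', IsClosed {g : G' | g • x = x})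
    {n m : ℕ} (a : Fin n → ↥(FinSupp X' H')) (b : Fin m → X')
    (hb : Set.range b = tildeTuple X' H' a) (α : Ordinal) :
    ∀ A' : Set ↥(FinSupp X' H'), A'.Finite →
      (NMge G' ↥(FinSupp X' H') a α A' ↔ NMge G' X' b α (tildeSet X' H' A')) := by
  induction α using Ordinal.limitRecOn with
  | zero =>
    intro A' _
    exact iff_of_true (NMge_zero' a A') (NMge_zero' b _)
  | add_one o ih =>
    intro A' hA'
    rw [← Order.succ_eq_add_one, NMge_succ', NMge_succ']
    constructor
    · rintro ⟨B, hAB, hBfin, hdep, hge⟩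
      refine ⟨tildeSet X' H' B, tildeSet_mono' hAB, tildeSet_finite' hBfin, ?_, ?_⟩
      · intro hind
        exact hdep ((core_indep hstab a b hb A' B hA' hBfin).mpr hind)
      · exact (ih B hBfin).mp hge
    · rintro ⟨D, hAD, hDfin, hdep, hge⟩
      obtain ⟨h₀, hh₀⟩ := exists_ne (1 : H')
      classical
      set δ : X' → ↥(FinSupp X' H') := fun x =>
        ⟨fun z => if z = x then h₀ else 1, by
          apply Set.Finite.subset (Set.finite_singleton x)
          intro z hz
          rw [Function.mem_mulSupport] at hz
          by_contra hzx
          simp only [Set.mem_singleton_iff] at hzx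
          exact hz (if_neg hzx)⟩ with hδ
      have hδsupp : ∀ x : X', Function.mulSupport ((δ x : X' → H')) = {x} := by
        intro x
        show Function.mulSupport (fun z : X' => if z = x then h₀ else 1) = {x}
        ext z
        rw [Function.mem_mulSupport, Set.mem_singleton_iff]
        by_cases hzx : z = x
        · simp [hzx, hh₀]
        · simp [hzx]
      set B : Set ↥(FinSupp X' H') := A' ∪ δ '' D with hBdef
      have hBfin : B.Finite := hA'.union (hDfin.image δ)
      have htB : tildeSet X' H' B = D := by
        rw [hBdef, tildeSet_union']
        have h2 : tildeSet X' H' (δ '' D) = D := by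
          unfold tildeSet
          rw [Set.biUnion_image]
          simp only [hδsupp]
          exact Set.biUnion_of_singleton D
        rw [h2]
        exact Set.union_eq_self_of_subset_left hAD
      refine ⟨B, Set.subset_union_left, hBfin, ?_, ?_⟩
      · intro hind
        apply hdep
        have h3 := (core_indep hstab a b hb A' B hA' hBfin).mp hind
        rwa [htB] at h3
      · have h4 := ih B hBfin
        rw [htB] at h4
        exact h4.mpr hge
  | limit o ho ih =>
    intro A' hA'
    rw [NMge_limit' a ho, NMge_limit' b ho]
    exact ⟨fun h β hβ => (ih β hβ A' hA').mp (h β hβ),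
           fun h β hβ => (ih β hβ A' hA').mpr (h β hβ)⟩

lemma indep_always_left' [Subsingleton H'] [PolishSpace G']
    {n : ℕ} (a : Fin n → ↥(FinSupp X' H')) (A' B' : Set ↥(FinSupp X' H')) :
    NMIndep G' ↥(FinSupp X' H') a A' B' := by
  haveI hs : Subsingleton ↥(FinSupp X' H') :=
    ⟨fun x y => Subtype.ext (funext fun z => Subsingleton.elim _ _)⟩
  unfold NMIndep
  have huniv : {g : ↥(fixPt G' ↥(FinSupp X' H') A') |
      (fun i => (g : G') • a i) ∈ orbitOver G' ↥(FinSupp X' H') (A' ∪ B') a} = Set.univ := by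
    apply Set.eq_univ_iff_forall.2
    intro g
    exact ⟨1, one_mem _, funext fun i => Subsingleton.elim _ _⟩
  rw [huniv]
  have hWuniv : ((fixPt G' ↥(FinSupp X' H') A' : Subgroup G') : Set G') = Set.univ :=
    Set.eq_univ_iff_forall.2 fun g y _ => Subsingleton.elim _ _
  exact not_isMeagre_univ_subgroup' (by rw [hWuniv]; exact isClosed_univ)

lemma indep_always_right' [PolishSpace G']
    (hstab : ∀ x : X', IsClosed {g : G' | g • x = x})
    {m : ℕ} (b : Fin m → X') (hm : IsEmpty (Fin m)) (A'' B'' : Set X') :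
    NMIndep G' X' b A'' B'' := by
  unfold NMIndep
  have huniv : {g : ↥(fixPt G' X' A'') |
      (fun i => (g : G') • b i) ∈ orbitOver G' X' (A'' ∪ B'') b} = Set.univ := by
    apply Set.eq_univ_iff_forall.2
    intro g
    exact ⟨1, one_mem _, funext fun i => hm.elim i⟩
  rw [huniv]
  exact not_isMeagre_univ_subgroup' (fixPt_isClosed' hstab A'')

lemma main_trivial' [Subsingleton H'] [PolishSpace G']
    (hstab : ∀ x : X', IsClosed {g : G' | g • x = x})
    {n m : ℕ} (a : Fin n → ↥(FinSupp X' H')) (b : Fin m → X')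
    (hb : Set.range b = tildeTuple X' H' a) (α : Ordinal) :
    ∀ A' : Set ↥(FinSupp X' H'), A'.Finite →
      (NMge G' ↥(FinSupp X' H') a α A' ↔ NMge G' X' b α (tildeSet X' H' A')) := by
  have hempty : Set.range b = ∅ := by
    rw [hb]
    apply Set.eq_empty_iff_forall_notMem.2
    intro x hx
    obtain ⟨i, hi⟩ := Set.mem_iUnion.1 hx
    exact hi (Subsingleton.elim _ _)
  have hm : IsEmpty (Fin m) := Set.range_eq_empty_iff.1 hempty
  induction α using Ordinal.limitRecOn with
  | zero =>
    intro A' _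
    exact iff_of_true (NMge_zero' a A') (NMge_zero' b _)
  | add_one o ih =>
    intro A' hA'
    rw [← Order.succ_eq_add_one, NMge_succ', NMge_succ']
    constructor
    · rintro ⟨B, _, _, hdep, _⟩
      exact (hdep (indep_always_left' a A' B)).elim
    · rintro ⟨D, _, _, hdep, _⟩
      exact (hdep (indep_always_right' hstab b hm _ D)).elim
  | limit o ho ih =>
    intro A' hA'
    rw [NMge_limit' a ho, NMge_limit' b ho]
    exact ⟨fun h β hβ => (ih β hβ A' hA').mp (h β hβ),
           fun h β hβ => (ih β hβ A' hA').mpr (h β hβ)⟩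

end AuxNMge
/-- Let `(X,G)` be a Polish structure and `H` a countable group. Let `a` be
a finite tuple of elements of `H(X)`, `A` a finite subset of `H(X)`, and `b` a finite tuple of
elements of `X` enumerating `ã`. Then for every ordinal `α`: `NM(a/A) ≥ α` holds in
`(H(X),G)` iff `NM(b/Ã) ≥ α` holds in `(X,G)`; in particular `NM(a/A) = NM(b/Ã)`. -/
theorem statement4 [TopologicalSpace G] [IsTopologicalGroup G] [PolishSpace G]
    [FaithfulSMul G X] (hstab : ∀ x : X, IsClosed {g : G | g • x = x})
    [Countable H]
    {n m : ℕ} (a : Fin n → ↥(FinSupp X H)) (A : Finset ↥(FinSupp X H))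
    (b : Fin m → X) (hb : Set.range b = tildeTuple X H a) :
    ∀ α : Ordinal,
      NMge G ↥(FinSupp X H) a α (A : Set ↥(FinSupp X H)) ↔
        NMge G X b α (tildeSet X H (A : Set ↥(FinSupp X H))) := by
  intro α
  rcases subsingleton_or_nontrivial H with hH | hH
  · exact main_trivial' hstab a b hb α (A : Set ↥(FinSupp X H)) A.finite_toSet
  · exact main_nontrivial' hstab a b hb α (A : Set ↥(FinSupp X H)) A.finite_toSet
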